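/- arXiv:2401.17850 — 3 statements merged into one kernel-verified Lean document; each statement's English description precedes it below -/
import Mathlib

section
/- Let d ≥ 1 and let f ∈ MvPolynomial (Fin 3) ℂ have order ≥ d, and let f̃ ∈ MvPolynomial (Fin 3) ℂ satisfy y₁^d · f̃ = σ(f), where σ is the blow-up substitution. Let b = (b₁,b₂,b₃) ∈ ℂ³ with b₁ ≠ 0. If f̃(b) = 0 and all three partial derivatives of f̃ vanish at b, then at the point w := (b₁, b₁b₂, b₁b₃) (which is nonzero), one has f(w) = 0 and all three partial derivatives of f vanish at w. (Critical zeros of the strict transform lying off the exceptional divisor map to critical zeros of f away from the origin; this is the step used in the proof of Claim 4.2 to contradict the isolatedness of the singularity of f.) -/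
open MvPolynomial

/-- The blow-up substitution `σ : z₁ ↦ y₁, z₂ ↦ y₁y₂, z₃ ↦ y₁y₃`
(first chart of the point blow-up of `ℂ³` at the origin). -/
noncomputable def blowupSubst : MvPolynomial (Fin 3) ℂ →ₐ[ℂ] MvPolynomial (Fin 3) ℂ :=
  aeval ![X 0, X 0 * X 1, X 0 * X 2]


lemma pderiv_aeval_chain (g : Fin 3 → MvPolynomial (Fin 3) ℂ) (i : Fin 3)
    (p : MvPolynomial (Fin 3) ℂ) :
    pderiv i (aeval g p) = ∑ j : Fin 3, aeval g (pderiv j p) * pderiv i (g j) := by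
  induction p using MvPolynomial.induction_on with
  | C a => simp
  | add p q hp hq =>
      rw [map_add, map_add, hp, hq, ← Finset.sum_add_distrib]
      exact (Finset.sum_congr rfl fun k _ => by simp [add_mul]).symm
  | mul_X p j hp =>
      rw [map_mul, aeval_X, pderiv_mul, hp]
      simp only [Fin.sum_univ_three] at *
      fin_cases j <;>
        simp [pderiv_X, Pi.single_apply, pderiv_X_self, pderiv_X_of_ne] <;> ring

lemma eval_aeval_blowup (b : Fin 3 → ℂ) (p : MvPolynomial (Fin 3) ℂ) :
    eval b (aeval ![X 0, X 0 * X 1, X 0 * X 2] p) = eval ![b 0, b 0 * b 1, b 0 * b 2] p := by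
  induction p using MvPolynomial.induction_on with
  | C a => simp
  | add p q hp hq => rw [map_add, map_add, hp, hq, map_add]
  | mul_X p j hp =>
      rw [map_mul, map_mul, hp, map_mul]
      congr 1
      fin_cases j <;> simp


/-- Critical zeros of the strict transform `f̃` (with `y₁^d · f̃ = σ(f)`) lying off
the exceptional divisor `y₁ = 0` map, under the blow-up, to critical zeros of `f`
away from the origin. -/
theorem critical_zero_off_exceptional_divisor (d : ℕ) (hd : 1 ≤ d)
    (f ftilde : MvPolynomial (Fin 3) ℂ)
    (horder : ∀ k < d, homogeneousComponent k f = 0)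
    (hstrict : X 0 ^ d * ftilde = blowupSubst f)
    (b : Fin 3 → ℂ) (hb1 : b 0 ≠ 0)
    (hz : eval b ftilde = 0)
    (hcrit : ∀ i : Fin 3, eval b (pderiv i ftilde) = 0) :
    (![b 0, b 0 * b 1, b 0 * b 2] : Fin 3 → ℂ) ≠ 0 ∧
    eval ![b 0, b 0 * b 1, b 0 * b 2] f = 0 ∧
    ∀ i : Fin 3, eval ![b 0, b 0 * b 1, b 0 * b 2] (pderiv i f) = 0 := by
  have hbl : ∀ p, blowupSubst p = aeval ![X 0, X 0 * X 1, X 0 * X 2] p := fun _ => rfl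
  have hwne : (![b 0, b 0 * b 1, b 0 * b 2] : Fin 3 → ℂ) ≠ 0 := by
    intro h
    exact hb1 (by simpa using congrFun h 0)
  have hfz : eval ![b 0, b 0 * b 1, b 0 * b 2] f = 0 := by
    rw [← eval_aeval_blowup, ← hbl, ← hstrict]
    simp [hz]
  have hC : ∀ i : Fin 3, eval b (pderiv i (aeval ![X 0, X 0 * X 1, X 0 * X 2] f)) = 0 := by
    intro i
    rw [← hbl, ← hstrict, pderiv_mul, pderiv_pow]
    simp [hz, hcrit i]
  have hE : ∀ i : Fin 3,
      eval b (∑ j : Fin 3,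
        aeval ![X 0, X 0 * X 1, X 0 * X 2] (pderiv j f) *
          pderiv i (![X 0, X 0 * X 1, X 0 * X 2] j)) = 0 := by
    intro i
    rw [← pderiv_aeval_chain]
    exact hC i
  set A : Fin 3 → ℂ := fun j => eval ![b 0, b 0 * b 1, b 0 * b 2] (pderiv j f) with hA
  have e1 := hE 1
  have e2 := hE 2
  have e0 := hE 0
  simp only [Fin.sum_univ_three, Matrix.cons_val_zero, Matrix.cons_val_one, Matrix.head_cons,
    Matrix.cons_val_two, Matrix.tail_cons, map_add, map_mul, eval_aeval_blowup, ← hA,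
    pderiv_mul, pderiv_X, Pi.single_apply, eval_X,     if_true, if_false, Fin.isValue, mul_one, mul_zero, zero_mul, add_zero, zero_add,
    one_mul, show ((1:Fin 3) = 0) = False by simp, show ((0:Fin 3) = 1) = False by simp,
    show ((2:Fin 3) = 0) = False by simp, show ((2:Fin 3) = 1) = False by simp,
    show ((0:Fin 3) = 2) = False by simp, show ((1:Fin 3) = 2) = False by simp,
    eq_self_iff_true] at e0 e1 e2
  have hA1 : A 1 = 0 := by
    rcases mul_eq_zero.mp e1 with h | h
    · exact h
    · exact absurd h hb1
  have hA2 : A 2 = 0 := by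
    rcases mul_eq_zero.mp e2 with h | h
    · exact h
    · exact absurd h hb1
  have hA0 : A 0 = 0 := by
    have h1 : (eval ![b 0, b 0 * b 1, b 0 * b 2]) ((pderiv 1) f) = 0 := hA1
    have h2 : (eval ![b 0, b 0 * b 1, b 0 * b 2]) ((pderiv 2) f) = 0 := hA2
    rw [h1, h2] at e0
    simpa using e0
  refine ⟨hwne, hfz, ?_⟩
  intro i
  fin_cases i
  · exact hA0
  · exact hA1
  · exact hA2
end

section
/- Let d ≥ 1 and let f ∈ MvPolynomial (Fin 3) ℂ have order ≥ d, with homogeneous decomposition f = Σ_{j≥0} f_{d+j}, and let f̃ := Σ_{j≥0} y₁^j · f_{d+j}(1,y₂,y₃) be its strict transform. Let b₂, b₃ ∈ ℂ. If f̃(0,b₂,b₃) = 0 and all three partial derivatives of f̃ vanish at (0,b₂,b₃), then the two-variable polynomial g(y₂,y₃) := f_d(1,y₂,y₃) satisfies g(b₂,b₃) = 0 and both partial derivatives of g vanish at (b₂,b₃); that is, (b₂,b₃) is a singular point of the affine curve f_d(1,y₂,y₃) = 0 (the chart of the projective tangent cone). -/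
open MvPolynomial

lemma pderiv_aeval_comm {σ τ : Type*} [DecidableEq σ] [DecidableEq τ] [Fintype σ]
    (u : σ → MvPolynomial τ ℂ) (i : τ) (k : σ)
    (h : ∀ j, pderiv i (u j) = if j = k then 1 else 0) (p : MvPolynomial σ ℂ) :
    pderiv i (aeval u p) = aeval u (pderiv k p) := by
  induction p using MvPolynomial.induction_on with
  | C a => simp
  | add p q hp hq => simp only [map_add, hp, hq]
  | mul_X p n hp =>
      simp only [map_mul, aeval_X, pderiv_mul, hp, pderiv_X, map_add]
      rw [h n]
      by_cases hn : n = k <;> simp [hn, Pi.single_apply, mul_comm]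

lemma eval_aeval' {σ τ : Type*} (u : σ → MvPolynomial τ ℂ) (v : τ → ℂ)
    (p : MvPolynomial σ ℂ) :
    eval v (aeval u p) = eval (fun j => eval v (u j)) p := by
  have : eval v (aeval u p) = aeval (R := ℂ) v (aeval u p) := by
    rfl
  rw [this, comp_aeval_apply]
  rfl

/-- Critical zeros of the strict transform
`f̃ = Σ_j y₁^j · f_{d+j}(1,y₂,y₃)` lying on the exceptional divisor `y₁ = 0`
are singular points of the affine chart `f_d(1,y₂,y₃) = 0` of the projective
tangent cone. -/
theorem critical_zero_on_exceptional_divisor_is_singular_of_cone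
    (d : ℕ) (hd : 1 ≤ d) (f : MvPolynomial (Fin 3) ℂ)
    (horder : ∀ k < d, homogeneousComponent k f = 0)
    (ftilde : MvPolynomial (Fin 3) ℂ)
    (hft : ftilde =
      ∑ j ∈ Finset.range (f.totalDegree + 1),
        X 0 ^ j * aeval ![1, X 1, X 2] (homogeneousComponent (d + j) f))
    (b₂ b₃ : ℂ)
    (hz : eval ![0, b₂, b₃] ftilde = 0)
    (hcrit : ∀ i : Fin 3, eval ![0, b₂, b₃] (pderiv i ftilde) = 0) :
    eval ![b₂, b₃]
        (aeval ![(1 : MvPolynomial (Fin 2) ℂ), X 0, X 1]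
          (homogeneousComponent d f)) = 0 ∧
    ∀ i : Fin 2,
      eval ![b₂, b₃]
        (pderiv i (aeval ![(1 : MvPolynomial (Fin 2) ℂ), X 0, X 1]
          (homogeneousComponent d f))) = 0 := by
  -- Evaluations at composed points agree.
  have hcompose : ∀ p : MvPolynomial (Fin 3) ℂ,
      eval ![b₂, b₃] (aeval ![(1 : MvPolynomial (Fin 2) ℂ), X 0, X 1] p)
        = eval ![0, b₂, b₃] (aeval ![1, X 1, X 2] p) := by
    intro p
    have hfun : (fun j => eval ![b₂, b₃] (![(1 : MvPolynomial (Fin 2) ℂ), X 0, X 1] j))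
        = fun j => eval ![0, b₂, b₃] ((![1, X 1, X 2] : Fin 3 → MvPolynomial (Fin 3) ℂ) j) := by
      funext j; fin_cases j <;> simp
    rw [eval_aeval', eval_aeval', hfun]
  -- Evaluating ftilde at y₁ = 0 kills all terms except j = 0.
  have hzero : ∀ p : MvPolynomial (Fin 3) ℂ, ∀ j : ℕ,
      eval ![0, b₂, b₃] (X 0 ^ j * aeval ![1, X 1, X 2] p)
        = (if j = 0 then 1 else 0) * eval ![0, b₂, b₃] (aeval ![1, X 1, X 2] p) := by
    intro p j
    rcases j with _ | j <;> simp [Matrix.cons_val_zero]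
  have hsum : eval ![0, b₂, b₃] ftilde
      = eval ![0, b₂, b₃] (aeval ![1, X 1, X 2] (homogeneousComponent d f)) := by
    rw [hft, map_sum]
    rw [Finset.sum_congr rfl (fun j _ => hzero _ j)]
    simp [Finset.sum_ite_eq' (Finset.range (f.totalDegree + 1)) 0]
  -- derivative commuting in Fin 3
  have hcomm3 : ∀ (k : Fin 3), k ≠ 0 → ∀ p : MvPolynomial (Fin 3) ℂ,
      pderiv k (aeval (![1, X 1, X 2] : Fin 3 → MvPolynomial (Fin 3) ℂ) p)
        = aeval (![1, X 1, X 2] : Fin 3 → MvPolynomial (Fin 3) ℂ) (pderiv k p) := by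
    intro k hk p
    apply pderiv_aeval_comm
    intro j
    fin_cases k
    · exact absurd rfl hk
    all_goals fin_cases j <;>
      simp [pderiv_one, pderiv_X_self, pderiv_X_of_ne, Fin.ext_iff]
  -- derivative commuting in Fin 2
  have hcomm2 : ∀ (i : Fin 2) (p : MvPolynomial (Fin 3) ℂ),
      pderiv i (aeval ![(1 : MvPolynomial (Fin 2) ℂ), X 0, X 1] p)
        = aeval ![(1 : MvPolynomial (Fin 2) ℂ), X 0, X 1] (pderiv i.succ p) := by
    intro i p
    apply pderiv_aeval_comm
    intro j
    fin_cases i <;> fin_cases j <;>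
      simp [pderiv_one, pderiv_X_self, pderiv_X_of_ne, Fin.ext_iff]
  constructor
  · rw [hcompose, ← hsum, hz]
  · intro i
    rw [hcomm2, hcompose]
    have hterm : ∀ j : ℕ,
        eval ![0, b₂, b₃] (pderiv i.succ
            (X 0 ^ j * aeval ![1, X 1, X 2] (homogeneousComponent (d + j) f)))
          = (if j = 0 then 1 else 0) *
            eval ![0, b₂, b₃]
              (aeval ![1, X 1, X 2] (pderiv i.succ (homogeneousComponent (d + j) f))) := by
      intro j
      have h0 : pderiv i.succ (X (0 : Fin 3) ^ j : MvPolynomial (Fin 3) ℂ) = 0 := by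
        rw [pderiv_pow, pderiv_X_of_ne (Ne.symm (Fin.succ_ne_zero i))]
        ring
      rw [pderiv_mul, h0, hcomm3 i.succ (Fin.succ_ne_zero i), zero_mul, zero_add, hzero]
    have hdsum : eval ![0, b₂, b₃] (pderiv i.succ ftilde)
        = eval ![0, b₂, b₃]
            (aeval ![1, X 1, X 2] (pderiv i.succ (homogeneousComponent d f))) := by
      rw [hft, map_sum, map_sum,
        Finset.sum_congr rfl (fun j _ => hterm j)]
      simp [Finset.sum_ite_eq' (Finset.range (f.totalDegree + 1)) 0]
    rw [← hdsum, hcrit]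
end

section
/- Let h ∈ MvPolynomial (Fin 2) ℂ be a polynomial in two variables X₂, X₃, let H ∈ MvPolynomial (Fin 3) ℂ be its image under the variable inclusion sending X₂, X₃ to the last two variables of MvPolynomial (Fin 3) ℂ, let c ∈ ℂ with c ≠ 0, and let m ≥ 1. Set g := H + c·X₁^m ∈ MvPolynomial (Fin 3) ℂ. If the two-variable Milnor algebra MvPolynomial (Fin 2) ℂ / J(h) is finite-dimensional over ℂ, then the Milnor algebra of g is finite-dimensional over ℂ and dim_ℂ (MvPolynomial (Fin 3) ℂ / J(g)) = (m−1) · dim_ℂ (MvPolynomial (Fin 2) ℂ / J(h)). (Milnor number of the suspension h(x₂,x₃) + c x₁^m, the model form of a blow-ADE singularity of blow-order m.) -/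
open MvPolynomial

/-- The Jacobian ideal of `g`, generated by its partial derivatives. -/
noncomputable def jacobianIdeal {n : ℕ} (g : MvPolynomial (Fin n) ℂ) :
    Ideal (MvPolynomial (Fin n) ℂ) :=
  Ideal.span (Set.range fun i : Fin n => pderiv i g)

set_option maxHeartbeats 2000000 in
set_option synthInstance.maxHeartbeats 400000 in
/-- Milnor number of the suspension `h(x₂,x₃) + c·x₁^m` (the model form of a
blow-ADE singularity of blow-order `m`): if the Milnor algebra of `h` is
finite-dimensional, then so is that of `g = h(x₂,x₃) + c x₁^m`, and
`μ(g) = (m-1)·μ(h)`. -/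
theorem milnor_number_suspension (h : MvPolynomial (Fin 2) ℂ)
    (c : ℂ) (hc : c ≠ 0) (m : ℕ) (hm : 1 ≤ m)
    (H : MvPolynomial (Fin 3) ℂ) (hH : H = rename (Fin.succ : Fin 2 → Fin 3) h)
    (g : MvPolynomial (Fin 3) ℂ) (hg : g = H + C c * X 0 ^ m)
    (hfin : FiniteDimensional ℂ (MvPolynomial (Fin 2) ℂ ⧸ jacobianIdeal h)) :
    FiniteDimensional ℂ (MvPolynomial (Fin 3) ℂ ⧸ jacobianIdeal g) ∧
    Module.finrank ℂ (MvPolynomial (Fin 3) ℂ ⧸ jacobianIdeal g) =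
      (m - 1) * Module.finrank ℂ (MvPolynomial (Fin 2) ℂ ⧸ jacobianIdeal h) := by
  subst hH hg
  -- Step 1: the partial derivatives of `g`
  have h1 : pderiv (0 : Fin 3) (rename (Fin.succ : Fin 2 → Fin 3) h) = 0 := by
    apply pderiv_eq_zero_of_notMem_vars
    intro hmem
    obtain ⟨j, -, hj⟩ := Finset.mem_image.mp (vars_rename _ h hmem)
    exact Fin.succ_ne_zero j hj
  have hpd0 : pderiv (0 : Fin 3) (rename (Fin.succ : Fin 2 → Fin 3) h + C c * X 0 ^ m)
      = C (c * m) * X 0 ^ (m - 1) := by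
    rw [map_add, h1, zero_add, pderiv_C_mul, pderiv_pow, pderiv_X_self, C_mul, map_natCast]
    ring
  have hpds : ∀ i : Fin 2, pderiv i.succ (rename (Fin.succ : Fin 2 → Fin 3) h + C c * X 0 ^ m)
      = rename (Fin.succ : Fin 2 → Fin 3) (pderiv i h) := by
    intro i
    rw [map_add, pderiv_rename (Fin.succ_injective 2), pderiv_C_mul, pderiv_pow,
      pderiv_X_of_ne (Fin.succ_ne_zero i).symm]
    ring
  set g : MvPolynomial (Fin 3) ℂ := rename (Fin.succ : Fin 2 → Fin 3) h + C c * X 0 ^ m with hg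
  -- Step 2: the image of the Jacobian ideal under `finSuccEquiv`
  have key : (MvPolynomial.finSuccEquiv ℂ 2).toAlgHom.comp
      (rename (Fin.succ : Fin 2 → Fin 3)) = Polynomial.CAlgHom := by
    apply MvPolynomial.algHom_ext
    intro i
    simp [Polynomial.CAlgHom, finSuccEquiv_X_succ]
  have hren : ∀ p : MvPolynomial (Fin 2) ℂ,
      MvPolynomial.finSuccEquiv ℂ 2 (rename Fin.succ p) = Polynomial.C p := by
    intro p
    simpa [Polynomial.CAlgHom] using DFunLike.congr_fun key p
  have hCC : ∀ a : ℂ, MvPolynomial.finSuccEquiv ℂ 2 (C a) = Polynomial.C (MvPolynomial.C a) := by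
    intro a; simp [finSuccEquiv_apply]
  have hcm : (c * (m : ℂ)) ≠ 0 := mul_ne_zero hc (Nat.cast_ne_zero.mpr (by omega))
  have hunit : IsUnit (Polynomial.C (MvPolynomial.C (c * m) : MvPolynomial (Fin 2) ℂ)) := by
    have := (isUnit_iff_ne_zero.mpr hcm).map (algebraMap ℂ (Polynomial (MvPolynomial (Fin 2) ℂ)))
    convert this using 2
    rfl
  have hmap : Ideal.map
      (MvPolynomial.finSuccEquiv ℂ 2 : MvPolynomial (Fin 3) ℂ →+* Polynomial (MvPolynomial (Fin 2) ℂ))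
      (jacobianIdeal g)
      = Ideal.span {(Polynomial.X : Polynomial (MvPolynomial (Fin 2) ℂ)) ^ (m-1)}
        ⊔ Ideal.map Polynomial.C (jacobianIdeal h) := by
    rw [jacobianIdeal, Ideal.map_span, Fin.range_fin_succ, Set.image_insert_eq, Ideal.span_insert]
    congr 1
    · have : (MvPolynomial.finSuccEquiv ℂ 2 :
          MvPolynomial (Fin 3) ℂ →+* Polynomial (MvPolynomial (Fin 2) ℂ))
          (pderiv (0 : Fin 3) g) = Polynomial.C (MvPolynomial.C (c * m)) * Polynomial.X ^ (m-1) := by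
        rw [hpd0]
        push_cast
        rw [map_mul, map_pow, RingHom.coe_coe, hCC, finSuccEquiv_X_zero]
      rw [this, Ideal.span_singleton_mul_left_unit hunit]
    · rw [jacobianIdeal, Ideal.map_span]
      congr 1
      have ht : Fin.tail (fun i : Fin 3 => pderiv i g)
          = fun i : Fin 2 => rename (Fin.succ : Fin 2 → Fin 3) (pderiv i h) := by
        funext i; exact hpds i
      rw [ht, ← Set.range_comp, ← Set.range_comp]
      simp only [Function.comp_def, RingHom.coe_coe, hren]
  -- Step 3: the quotient of `Polynomial S` and its kernel description
  set I := jacobianIdeal h with hIdef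
  set S := MvPolynomial (Fin 2) ℂ ⧸ I with hSdef
  letI : CommRing S := Ideal.Quotient.commRing I
  letI : Algebra ℂ S := Ideal.Quotient.algebra ℂ
  set Φ : Polynomial (MvPolynomial (Fin 2) ℂ) →ₐ[ℂ]
      (Polynomial S ⧸ (Ideal.span {(Polynomial.X : Polynomial S) ^ (m-1)})) :=
    (Ideal.Quotient.mkₐ ℂ (Ideal.span {(Polynomial.X : Polynomial S) ^ (m-1)})).comp
      (Polynomial.mapAlgHom (Ideal.Quotient.mkₐ ℂ I)) with hΦ
  have hsurj : Function.Surjective Φ := by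
    rw [hΦ]
    exact (Ideal.Quotient.mk_surjective).comp
      (Polynomial.map_surjective _ Ideal.Quotient.mk_surjective)
  have hker : RingHom.ker Φ
      = Ideal.span {(Polynomial.X : Polynomial (MvPolynomial (Fin 2) ℂ)) ^ (m-1)}
        ⊔ Ideal.map Polynomial.C I := by
    have h1 : RingHom.ker Φ = Ideal.comap
        (Polynomial.mapRingHom (Ideal.Quotient.mk I))
        (Ideal.span {(Polynomial.X : Polynomial S) ^ (m-1)}) := by
      ext x
      rw [RingHom.mem_ker, Ideal.mem_comap]
      show Ideal.Quotient.mk _ (Polynomial.map (Ideal.Quotient.mk I) x) = 0 ↔ _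
      rw [Ideal.Quotient.eq_zero_iff_mem]
      rfl
    have h2 : (Ideal.span {(Polynomial.X : Polynomial S) ^ (m-1)})
        = Ideal.map (Polynomial.mapRingHom (Ideal.Quotient.mk I))
          (Ideal.span {(Polynomial.X : Polynomial (MvPolynomial (Fin 2) ℂ)) ^ (m-1)}) := by
      rw [Ideal.map_span, Set.image_singleton, Polynomial.coe_mapRingHom,
        Polynomial.map_pow, Polynomial.map_X]
    have hs : Function.Surjective (Polynomial.mapRingHom (Ideal.Quotient.mk I)) :=
      Polynomial.map_surjective _ Ideal.Quotient.mk_surjective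
    rw [h1, h2, Ideal.comap_map_of_surjective _ hs, ← RingHom.ker_eq_comap_bot,
      Polynomial.ker_mapRingHom, Ideal.mk_ker]
  -- Step 4: assemble the algebra equivalence
  let E1 : (MvPolynomial (Fin 3) ℂ ⧸ jacobianIdeal g) ≃ₐ[ℂ]
      (Polynomial (MvPolynomial (Fin 2) ℂ) ⧸
        (Ideal.span {(Polynomial.X : Polynomial (MvPolynomial (Fin 2) ℂ)) ^ (m-1)}
          ⊔ Ideal.map Polynomial.C I)) :=
    Ideal.quotientEquivAlg _ _ (MvPolynomial.finSuccEquiv ℂ 2) hmap.symm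
  let E2 : (Polynomial (MvPolynomial (Fin 2) ℂ) ⧸
        (Ideal.span {(Polynomial.X : Polynomial (MvPolynomial (Fin 2) ℂ)) ^ (m-1)}
          ⊔ Ideal.map Polynomial.C I)) ≃ₐ[ℂ]
      (Polynomial S ⧸ (Ideal.span {(Polynomial.X : Polynomial S) ^ (m-1)})) :=
    (Ideal.quotientEquivAlgOfEq ℂ hker.symm).trans
      (Ideal.quotientKerAlgEquivOfSurjective hsurj)
  let E := E1.trans E2
  -- Step 5: the power basis of `S[X]/(X^(m-1))` over `S`
  have hSfin : FiniteDimensional ℂ S := hfin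
  have hmon : ((Polynomial.X : Polynomial S) ^ (m-1)).Monic := Polynomial.monic_X_pow _
  let pb := AdjoinRoot.powerBasis' hmon
  have hdim : pb.dim * Module.finrank ℂ S = (m - 1) * Module.finrank ℂ S := by
    rcases subsingleton_or_nontrivial S with hS | hS
    · have h0 : Module.finrank ℂ S = 0 := Module.finrank_zero_of_subsingleton
      simp [h0]
    · have : pb.dim = m - 1 := by simp [pb, Polynomial.natDegree_X_pow]
      rw [this]
  let e : (Polynomial S ⧸ (Ideal.span {(Polynomial.X : Polynomial S) ^ (m-1)}))
      ≃ₗ[S] (Fin pb.dim → S) := pb.basis.equivFun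
  let eℂ := e.restrictScalars ℂ
  have hfd : FiniteDimensional ℂ (Polynomial S ⧸
      (Ideal.span {(Polynomial.X : Polynomial S) ^ (m-1)})) :=
    LinearEquiv.finiteDimensional eℂ.symm
  have hrk : Module.finrank ℂ (Polynomial S ⧸
      (Ideal.span {(Polynomial.X : Polynomial S) ^ (m-1)}))
      = (m - 1) * Module.finrank ℂ S := by
    rw [eℂ.finrank_eq, Module.finrank_pi_fintype, Finset.sum_const, smul_eq_mul,
      Finset.card_univ, Fintype.card_fin, hdim]
  constructor
  · exact LinearEquiv.finiteDimensional E.toLinearEquiv.symm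
  · rw [E.toLinearEquiv.finrank_eq, hrk]
end
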